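/- Let A be an n×n subring matrix with diagonal (p^{e_1},...,p^{e_{n-1}},1) and I = {i : e_i ≠ 0} of size k. Then the rank of the cokernel Z^n/col(A) equals exactly k; i.e., the corank of the subring col(A) equals the number of diagonal entries that are nontrivial powers of p. -/

import Mathlib

def colSpan {n : ℕ} (A : Matrix (Fin n) (Fin n) ℤ) : AddSubgroup (Fin n → ℤ) :=
  AddSubgroup.closure (Set.range fun j => fun i => A i j)

def IsSubringOf {n : ℕ} (R : AddSubgroup (Fin n → ℤ)) : Prop :=
  (fun _ => (1 : ℤ)) ∈ R ∧ ∀ u v : Fin n → ℤ, u ∈ R → v ∈ R → u * v ∈ R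

def IsHNF {n : ℕ} (A : Matrix (Fin n) (Fin n) ℤ) : Prop :=
  (∀ i j : Fin n, (j : ℕ) < (i : ℕ) → A i j = 0) ∧
  (∀ i j : Fin n, (i : ℕ) < (j : ℕ) → 0 ≤ A i j ∧ A i j < A i i)

def IsSubringMatrix {n : ℕ} (A : Matrix (Fin n) (Fin n) ℤ) : Prop :=
  IsHNF A ∧ A.det ≠ 0 ∧ IsSubringOf (colSpan A)

def GenLE {n : ℕ} (R : AddSubgroup (Fin n → ℤ)) (k : ℕ) : Prop :=
  ∃ S : Finset ((Fin n → ℤ) ⧸ R), S.card ≤ k ∧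
    AddSubgroup.closure (S : Set ((Fin n → ℤ) ⧸ R)) = ⊤

def RankGe {n : ℕ} (R : AddSubgroup (Fin n → ℤ)) (k : ℕ) : Prop :=
  ∀ S : Finset ((Fin n → ℤ) ⧸ R),
    AddSubgroup.closure (S : Set ((Fin n → ℤ) ⧸ R)) = ⊤ → k ≤ S.card

def RankEq {n : ℕ} (R : AddSubgroup (Fin n → ℤ)) (k : ℕ) : Prop :=
  GenLE R k ∧ RankGe R k

/-! ### Auxiliary lemmas -/

lemma colSpan_eq {n : ℕ} (A : Matrix (Fin n) (Fin n) ℤ) :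
    colSpan A = (LinearMap.range (Matrix.mulVecLin A)).toAddSubgroup := by
  apply le_antisymm
  · rw [colSpan, AddSubgroup.closure_le]
    rintro x ⟨j, rfl⟩
    refine ⟨Pi.single j 1, ?_⟩
    ext i
    simp [Matrix.mulVecLin, Matrix.mulVec, dotProduct, Pi.single_apply]
  · rintro x ⟨y, rfl⟩
    have : y = ∑ j : Fin n, y j • Pi.single j (1 : ℤ) := by
      ext i; simp [Pi.single_apply]
    rw [this, map_sum]
    apply AddSubgroup.sum_mem
    intro j _
    rw [map_smul]
    apply AddSubgroup.zsmul_mem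
    apply AddSubgroup.subset_closure
    refine ⟨j, ?_⟩
    ext i
    simp [Matrix.mulVecLin, Matrix.mulVec, dotProduct, Pi.single_apply]

lemma mulVec_mem_colSpan {n : ℕ} (A : Matrix (Fin n) (Fin n) ℤ) (y : Fin n → ℤ) :
    A.mulVec y ∈ colSpan A := by
  rw [colSpan_eq]; exact ⟨y, rfl⟩

lemma exists_of_mem_colSpan {n : ℕ} {A : Matrix (Fin n) (Fin n) ℤ} {x : Fin n → ℤ}
    (h : x ∈ colSpan A) : ∃ y, A.mulVec y = x := by
  rw [colSpan_eq] at h; exact h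

lemma det_smul_mem_colSpan {n : ℕ} (A : Matrix (Fin n) (Fin n) ℤ) (x : Fin n → ℤ) :
    A.det • x ∈ colSpan A := by
  have : A.mulVec ((A.adjugate).mulVec x) = A.det • x := by
    rw [Matrix.mulVec_mulVec, Matrix.mul_adjugate, Matrix.smul_mulVec, Matrix.one_mulVec]
  rw [← this]; exact mulVec_mem_colSpan A _

lemma exists_exponent (p E : ℕ) (hp : p.Prime) :
    ∃ m : ℕ, 0 < m ∧ ∀ a : ℤ,
      ((p:ℤ) ∣ a → (p:ℤ)^E ∣ a^m) ∧ (¬(p:ℤ) ∣ a → (p:ℤ)^E ∣ a^m - 1) := by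
  set t := (p^E).totient with ht
  have htpos : 0 < t := Nat.totient_pos.mpr (pow_pos hp.pos E)
  refine ⟨(E+1) * (2 * t), by positivity, fun a => ⟨?_, ?_⟩⟩
  · intro ha
    have h1 : (p:ℤ)^E ∣ a^E := pow_dvd_pow_of_dvd ha E
    have h2 : a^E ∣ a^((E+1)*(2*t)) := pow_dvd_pow a (by nlinarith)
    exact h1.trans h2
  · intro ha
    have hcop : (a.natAbs).Coprime (p^E) := by
      apply Nat.Coprime.pow_right
      rw [Nat.coprime_comm, hp.coprime_iff_not_dvd]
      intro hd
      exact ha ((Int.natCast_dvd_natCast.mpr hd).trans (Int.natAbs_dvd.mpr dvd_rfl))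
    have heul : (a.natAbs) ^ t ≡ 1 [MOD p^E] := Nat.ModEq.pow_totient hcop
    have heul' : ((a.natAbs : ℤ)) ^ t ≡ 1 [ZMOD (p^E : ℕ)] := by
      have := Int.natCast_modEq_iff.mpr heul
      simpa using this
    have hsq : ((a.natAbs : ℤ))^(2*t) = a^(2*t) := by
      rw [pow_mul, pow_mul]
      congr 1
      exact Int.natAbs_sq a
    have heul2 : a ^ ((E+1)*(2*t)) ≡ 1 [ZMOD (p^E : ℕ)] := by
      have h2t : a^(2*t) ≡ 1 [ZMOD (p^E:ℕ)] := by
        rw [← hsq]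
        calc ((a.natAbs:ℤ))^(2*t) = (((a.natAbs:ℤ))^t)^2 := by rw [← pow_mul, mul_comm]
        _ ≡ 1^2 [ZMOD (p^E:ℕ)] := heul'.pow 2
        _ = 1 := one_pow 2
      calc a ^ ((E+1)*(2*t)) = (a^(2*t))^(E+1) := by rw [← pow_mul, mul_comm]
      _ ≡ 1^(E+1) [ZMOD (p^E:ℕ)] := h2t.pow _
      _ = 1 := one_pow _
    have := Int.ModEq.dvd heul2
    have h := (Int.dvd_neg.mpr this)
    simp only [neg_sub] at h
    exact_mod_cast (by push_cast at h ⊢; exact h : ((p:ℤ))^E ∣ a ^ ((E+1)*(2*t)) - 1)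

lemma pow_mem_colSpan {n : ℕ} {A : Matrix (Fin n) (Fin n) ℤ}
    (h1 : (fun _ => (1:ℤ)) ∈ colSpan A)
    (hmul : ∀ u v : Fin n → ℤ, u ∈ colSpan A → v ∈ colSpan A → u * v ∈ colSpan A)
    {x : Fin n → ℤ} (hx : x ∈ colSpan A) (m : ℕ) : x ^ m ∈ colSpan A := by
  induction m with
  | zero => rw [pow_zero]; exact h1
  | succ m ih => rw [pow_succ]; exact hmul _ _ ih hx

lemma key {n p E : ℕ} (hp : p.Prime) {A : Matrix (Fin n) (Fin n) ℤ}
    (htri : ∀ i j : Fin n, (j : ℕ) < (i : ℕ) → A i j = 0)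
    (hpos : ∀ j, 0 < A j j)
    (hdet : A.det = (p:ℤ)^E)
    (h1 : (fun _ => (1:ℤ)) ∈ colSpan A)
    (hmul : ∀ u v : Fin n → ℤ, u ∈ colSpan A → v ∈ colSpan A → u * v ∈ colSpan A)
    {x : Fin n → ℤ} (hx : x ∈ colSpan A)
    (hxj : ∀ j, A j j = 1 → (p:ℤ) ∣ x j) :
    ∀ c, (p:ℤ) ∣ x c := by
  by_contra hcon
  push_neg at hcon
  obtain ⟨c0, hc0⟩ := hcon
  obtain ⟨m, hm, hmprop⟩ := exists_exponent p E hp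
  set ε : Fin n → ℤ := fun c => if (p:ℤ) ∣ x c then 0 else 1 with hε
  have hdvd : ∀ c, (p:ℤ)^E ∣ (x^m) c - ε c := by
    intro c
    by_cases h : (p:ℤ) ∣ x c
    · simp only [hε, if_pos h, sub_zero, Pi.pow_apply]
      exact (hmprop (x c)).1 h
    · simp only [hε, if_neg h, Pi.pow_apply]
      exact (hmprop (x c)).2 h
  have hεR : ε ∈ colSpan A := by
    set t : Fin n → ℤ := fun c => ((x^m) c - ε c) / ((p:ℤ)^E) with htdef
    have hteq : ((p:ℤ)^E) • t = x^m - ε := by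
      funext c
      simp only [Pi.smul_apply, smul_eq_mul, Pi.sub_apply, htdef]
      exact Int.mul_ediv_cancel' (hdvd c)
    have h2 : ((p:ℤ)^E) • t ∈ colSpan A := by
      rw [← hdet]; exact det_smul_mem_colSpan A t
    have h3 : x ^ m ∈ colSpan A := pow_mem_colSpan h1 hmul hx m
    have : ε = x^m - ((p:ℤ)^E) • t := by rw [hteq]; ring
    rw [this]
    exact AddSubgroup.sub_mem _ h3 h2
  obtain ⟨y, hy⟩ := exists_of_mem_colSpan hεR
  have hεc0 : ε c0 = 1 := if_neg hc0
  have hyne : y ≠ 0 := by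
    rintro rfl
    rw [Matrix.mulVec_zero] at hy
    rw [← hy] at hεc0
    simp at hεc0
  set T := Finset.univ.filter (fun j => y j ≠ 0) with hT
  have hTne : T.Nonempty := by
    obtain ⟨j, hj⟩ := Function.ne_iff.mp hyne
    exact ⟨j, Finset.mem_filter.mpr ⟨Finset.mem_univ j, by simpa using hj⟩⟩
  set j1 := T.max' hTne with hj1def
  have hj1 : y j1 ≠ 0 := by
    have := T.max'_mem hTne
    simp only [hT, Finset.mem_filter] at this
    exact this.2
  have hmax : ∀ j, j1 < j → y j = 0 := by
    intro j hjgt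
    by_contra hne
    exact absurd (T.le_max' j (by simp [hT, hne])) (not_le.mpr hjgt)
  have hεj1 : ε j1 = A j1 j1 * y j1 := by
    rw [← hy]
    show (Finset.univ.sum fun j => A j1 j * y j) = _
    rw [Finset.sum_eq_single j1]
    · intro j _ hne
      rcases lt_or_gt_of_ne hne with h | h
      · rw [htri j1 j h, zero_mul]
      · rw [hmax j h, mul_zero]
    · intro h; exact absurd (Finset.mem_univ j1) h
  have hone : ε j1 = 0 ∨ ε j1 = 1 := by
    by_cases h : (p:ℤ) ∣ x j1
    · left; exact if_pos h
    · right; exact if_neg h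
  rcases hone with h0 | h1'
  · rw [h0] at hεj1
    have := mul_ne_zero (ne_of_gt (hpos j1)) hj1
    exact this hεj1.symm
  · rw [h1'] at hεj1
    have hA1 : A j1 j1 = 1 := by
      have h0 : (0:ℤ) ≤ A j1 j1 := le_of_lt (hpos j1)
      exact Int.eq_one_of_mul_eq_one_right h0 hεj1.symm
    have := hxj j1 hA1
    rw [hε] at h1'
    simp only [if_pos this] at h1'
    exact absurd h1' (by norm_num)

lemma single_eq_sum {n : ℕ} (v : Fin n → ℤ) :
    v = ∑ j : Fin n, v j • Pi.single j (1:ℤ) := by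
  ext i; simp [Pi.single_apply]

lemma genle_part {n k p : ℕ}
    (A : Matrix (Fin (n + 1)) (Fin (n + 1)) ℤ)
    (htri : ∀ i j : Fin (n+1), (j : ℕ) < (i : ℕ) → A i j = 0)
    (e : Fin n → ℕ)
    (hdiag : ∀ i : Fin n, A i.castSucc i.castSucc = (p : ℤ) ^ e i)
    (hlast : A (Fin.last n) (Fin.last n) = 1)
    (hcard : (Finset.univ.filter (fun i : Fin n => e i ≠ 0)).card = k) :
    GenLE (colSpan A) k := by
  classical
  set R := colSpan A with hR
  set mk : (Fin (n+1) → ℤ) →+ ((Fin (n+1) → ℤ) ⧸ R) := QuotientAddGroup.mk' R with hmk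
  set S1 := (Finset.univ.filter (fun i : Fin n => e i ≠ 0)).image
      (fun i => mk (Pi.single i.castSucc (1:ℤ))) with hS1
  have hmain : ∀ N : ℕ, ∀ c : Fin (n+1), (c:ℕ) < N →
      mk (Pi.single c (1:ℤ)) ∈ AddSubgroup.closure (S1 : Set _) := by
    intro N
    induction N with
    | zero => intro c hc; omega
    | succ N ih =>
      intro c hc
      by_cases hc1 : A c c = 1
      · -- use the column
        have hcol : (fun i => A i c) ∈ R := AddSubgroup.subset_closure ⟨c, rfl⟩
        have hz : mk (fun i => A i c) = 0 := (QuotientAddGroup.eq_zero_iff _).mpr hcol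
        have hexp : mk (fun i => A i c) = ∑ j : Fin (n+1), A j c • mk (Pi.single j (1:ℤ)) := by
          conv_lhs => rw [single_eq_sum (fun i => A i c)]
          rw [map_sum]
          exact Finset.sum_congr rfl fun j _ => map_zsmul mk _ _
        have hsplit := Finset.sum_erase_add Finset.univ
          (fun j => A j c • mk (Pi.single j (1:ℤ))) (Finset.mem_univ c)
        rw [hexp, ← hsplit] at hz
        simp only [hc1, one_zsmul] at hz
        have heq : mk (Pi.single c (1:ℤ)) =
            -∑ j ∈ Finset.univ.erase c, A j c • mk (Pi.single j (1:ℤ)) :=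
          eq_neg_of_add_eq_zero_right hz
        rw [heq]
        apply AddSubgroup.neg_mem
        apply AddSubgroup.sum_mem
        intro j hj
        have hjne : j ≠ c := (Finset.mem_erase.mp hj).1
        rcases lt_or_gt_of_ne hjne with h | h
        · exact AddSubgroup.zsmul_mem _
            (ih j (lt_of_lt_of_le (Fin.lt_iff_val_lt_val.mp h) (Nat.lt_succ_iff.mp hc))) _
        · rw [htri j c h, zero_zsmul]
          exact AddSubgroup.zero_mem _
      · -- c is castSucc i with e i ≠ 0
        have hcne : c ≠ Fin.last n := by
          rintro rfl; exact hc1 hlast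
        obtain ⟨i, rfl⟩ := Fin.exists_castSucc_eq.mpr hcne
        have hei : e i ≠ 0 := by
          intro h0
          rw [hdiag i, h0, pow_zero] at hc1
          exact hc1 rfl
        apply AddSubgroup.subset_closure
        rw [hS1]
        simp only [Finset.coe_image, Set.mem_image]
        exact ⟨i, by simp [hei], rfl⟩
  refine ⟨S1, Finset.card_image_le.trans (le_of_eq hcard), ?_⟩
  rw [eq_top_iff]
  rintro g -
  obtain ⟨x, rfl⟩ := QuotientAddGroup.mk'_surjective R g
  show mk x ∈ _
  have hxe : mk x = ∑ c : Fin (n+1), x c • mk (Pi.single c (1:ℤ)) := by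
    conv_lhs => rw [single_eq_sum x]
    rw [map_sum]
    exact Finset.sum_congr rfl fun c _ => map_zsmul mk _ _
  rw [hxe]
  apply AddSubgroup.sum_mem
  intro c _
  exact AddSubgroup.zsmul_mem _ (hmain (n+1) c c.isLt) _

lemma rankge_part {n k p E : ℕ} (hp : p.Prime)
    {A : Matrix (Fin (n + 1)) (Fin (n + 1)) ℤ}
    (htri : ∀ i j : Fin (n+1), (j : ℕ) < (i : ℕ) → A i j = 0)
    (hpos : ∀ j, 0 < A j j)
    (hdet : A.det = (p:ℤ)^E)
    (h1 : (fun _ => (1:ℤ)) ∈ colSpan A)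
    (hmul : ∀ u v : Fin (n+1) → ℤ, u ∈ colSpan A → v ∈ colSpan A → u * v ∈ colSpan A)
    (e : Fin n → ℕ)
    (hdiag : ∀ i : Fin n, A i.castSucc i.castSucc = (p : ℤ) ^ e i)
    (hcard : (Finset.univ.filter (fun i : Fin n => e i ≠ 0)).card = k) :
    RankGe (colSpan A) k := by
  classical
  haveI : Fact p.Prime := ⟨hp⟩
  haveI : NeZero p := ⟨hp.ne_zero⟩
  set R := colSpan A with hR
  set π : (Fin (n+1) → ℤ) →+ (Fin (n+1) → ZMod p) :=
    AddMonoidHom.mk' (fun x c => ((x c : ℤ) : ZMod p))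
      (by intro a b; funext c; simp) with hπ
  have hπapp : ∀ x c, π x c = ((x c : ℤ) : ZMod p) := fun x c => rfl
  set Bm : Submodule (ZMod p) (Fin (n+1) → ZMod p) :=
    { carrier := π '' (R : Set _)
      add_mem' := by
        rintro a b ⟨u, hu, rfl⟩ ⟨v, hv, rfl⟩
        exact ⟨u + v, R.add_mem hu hv, map_add π u v⟩
      zero_mem' := ⟨0, R.zero_mem, map_zero π⟩
      smul_mem' := by
        rintro c v ⟨u, hu, rfl⟩
        refine ⟨c.val • u, AddSubgroup.nsmul_mem R hu c.val, ?_⟩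
        rw [map_nsmul]
        rw [← Nat.cast_smul_eq_nsmul (ZMod p) c.val (π u), ZMod.natCast_val, ZMod.cast_id]
    } with hBm
  have hBmmem : ∀ v, v ∈ Bm ↔ ∃ x ∈ R, π x = v := by
    intro v; rfl
  have hinj : ∀ v ∈ Bm, (∀ j, A j j = 1 → v j = 0) → v = 0 := by
    intro v hv hv0
    obtain ⟨x, hx, rfl⟩ := (hBmmem v).mp hv
    have hdvd : ∀ j, A j j = 1 → (p:ℤ) ∣ x j := by
      intro j hj
      have := hv0 j hj
      rw [hπapp] at this
      exact_mod_cast (ZMod.intCast_zmod_eq_zero_iff_dvd _ _).mp this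
    have hall := key hp htri hpos hdet h1 hmul hx hdvd
    funext c
    rw [hπapp]
    exact (ZMod.intCast_zmod_eq_zero_iff_dvd _ _).mpr (hall c)
  set r : Bm →ₗ[ZMod p] ({j : Fin (n+1) // A j j = 1} → ZMod p) :=
    (LinearMap.funLeft (ZMod p) (ZMod p) (Subtype.val)).comp Bm.subtype with hr
  have hrinj : Function.Injective r := by
    rw [← LinearMap.ker_eq_bot, LinearMap.ker_eq_bot']
    intro ⟨v, hv⟩ hrv
    have : ∀ j, A j j = 1 → v j = 0 := by
      intro j hj
      have := congrFun hrv ⟨j, hj⟩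
      exact this
    exact Subtype.ext (hinj v hv this)
  have hrankB : Module.finrank (ZMod p) Bm ≤ Fintype.card {j : Fin (n+1) // A j j = 1} := by
    have := LinearMap.finrank_le_finrank_of_injective hrinj
    rwa [Module.finrank_pi] at this
  have hsub : Fintype.card {j : Fin (n+1) // A j j = 1} + k ≤ n + 1 := by
    rw [Fintype.card_subtype]
    have hdisj : Disjoint (Finset.univ.filter (fun j : Fin (n+1) => A j j = 1))
        ((Finset.univ.filter (fun i : Fin n => e i ≠ 0)).image Fin.castSucc) := by
      rw [Finset.disjoint_left]
      intro j hj hj2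
      obtain ⟨i, hi, rfl⟩ := Finset.mem_image.mp hj2
      have hi' : e i ≠ 0 := (Finset.mem_filter.mp hi).2
      have hj1 : A i.castSucc i.castSucc = 1 := (Finset.mem_filter.mp hj).2
      rw [hdiag i] at hj1
      have hdvd : (p:ℤ) ∣ (p:ℤ)^(e i) := dvd_pow_self _ hi'
      rw [hj1] at hdvd
      have := Int.le_of_dvd one_pos hdvd
      have := hp.two_le
      omega
    have himg : ((Finset.univ.filter (fun i : Fin n => e i ≠ 0)).image Fin.castSucc).card = k := by
      rw [Finset.card_image_of_injective _ (Fin.castSucc_injective n), hcard]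
    calc (Finset.univ.filter (fun j : Fin (n+1) => A j j = 1)).card + k
        = ((Finset.univ.filter (fun j : Fin (n+1) => A j j = 1)) ∪
           ((Finset.univ.filter (fun i : Fin n => e i ≠ 0)).image Fin.castSucc)).card := by
          rw [Finset.card_union_of_disjoint hdisj, himg]
      _ ≤ (Finset.univ : Finset (Fin (n+1))).card := Finset.card_le_card (Finset.subset_univ _)
      _ = n + 1 := by simp
  set V := (Fin (n+1) → ZMod p) ⧸ Bm with hV
  have hq : Module.finrank (ZMod p) V + Module.finrank (ZMod p) Bm = n + 1 := by
    rw [Submodule.finrank_quotient_add_finrank Bm, Module.finrank_pi]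
    simp
  have hkV : k ≤ Module.finrank (ZMod p) V := by omega
  intro S hS
  set g : (Fin (n+1) → ℤ) →+ V := (Bm.mkQ.toAddMonoidHom).comp π with hg
  have hker : ∀ x ∈ R, g x = 0 := by
    intro x hx
    show Bm.mkQ (π x) = 0
    rw [Submodule.mkQ_apply, Submodule.Quotient.mk_eq_zero]
    exact ⟨x, hx, rfl⟩
  set gbar : ((Fin (n+1) → ℤ) ⧸ R) →+ V := QuotientAddGroup.lift R g hker with hgbar
  have hgsurj : Function.Surjective gbar := by
    intro v
    obtain ⟨w, hw⟩ := Bm.mkQ_surjective v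
    refine ⟨QuotientAddGroup.mk (fun c => ((w c).val : ℤ)), ?_⟩
    show g _ = v
    rw [← hw]
    show Bm.mkQ (π _) = Bm.mkQ w
    congr 1
    funext c
    rw [hπapp]
    push_cast
    rw [ZMod.natCast_val, ZMod.cast_id]
  have hclos : AddSubgroup.closure (gbar '' (S : Set _)) = ⊤ := by
    rw [← AddMonoidHom.map_closure, hS]
    exact AddSubgroup.map_top_of_surjective gbar hgsurj
  have hspan : Submodule.span (ZMod p) ((S.image gbar : Finset V) : Set V) = ⊤ := by
    rw [eq_top_iff]
    intro v _
    have hv : v ∈ AddSubgroup.closure (gbar '' (S : Set _)) := by rw [hclos]; trivial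
    have hle : AddSubgroup.closure (gbar '' (S : Set _)) ≤
        (Submodule.span (ZMod p) ((S.image gbar : Finset V) : Set V)).toAddSubgroup := by
      rw [AddSubgroup.closure_le]
      intro w hw
      apply Submodule.subset_span
      rw [Finset.coe_image]
      exact hw
    exact hle hv
  have hfr : Module.finrank (ZMod p) V ≤ (S.image gbar).card := by
    have h := finrank_span_le_card (R := ZMod p) (((S.image gbar) : Finset V) : Set V)
    rw [hspan, finrank_top] at h
    simpa using h
  calc k ≤ Module.finrank (ZMod p) V := hkV
    _ ≤ (S.image gbar).card := hfr
    _ ≤ S.card := Finset.card_image_le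

theorem corank_eq_num_nontrivial_diag (n k p : ℕ) (hp : p.Prime)
    (A : Matrix (Fin (n + 1)) (Fin (n + 1)) ℤ) (hA : IsSubringMatrix A)
    (e : Fin n → ℕ)
    (hdiag : ∀ i : Fin n, A i.castSucc i.castSucc = (p : ℤ) ^ e i)
    (hlast : A (Fin.last n) (Fin.last n) = 1)
    (hcard : (Finset.univ.filter (fun i : Fin n => e i ≠ 0)).card = k) :
    RankEq (colSpan A) k := by
  obtain ⟨⟨htri, _⟩, hdet0, h1, hmul⟩ := hA
  have hpos : ∀ j, 0 < A j j := by
    intro j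
    refine Fin.lastCases ?_ ?_ j
    · rw [hlast]; exact one_pos
    · intro i
      rw [hdiag i]
      exact pow_pos (by exact_mod_cast hp.pos) _
  have hdet : A.det = (p:ℤ) ^ (∑ i, e i) := by
    have hbt : A.BlockTriangular id := by
      intro i j h
      exact htri i j h
    rw [Matrix.det_of_upperTriangular hbt]
    rw [Fin.prod_univ_castSucc]
    rw [hlast, mul_one]
    rw [Finset.prod_congr rfl (fun i _ => hdiag i)]
    rw [Finset.prod_pow_eq_pow_sum]
  exact ⟨genle_part A htri e hdiag hlast hcard,
    rankge_part hp htri hpos hdet h1 hmul e hdiag hcard⟩
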